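/- Let p be prime, q = p^r, and for 0 ≤ t ≤ q-1 define the polynomial h_t(x) = ∑_{k=t}^{q-1} (-1)^{k-t} C(k,t) C(x,k) ∈ 𝔽_p[x], where C(x,k) = x(x-1)⋯(x-k+1)/k!. Then the polynomials {h_t(x) : 0 ≤ t ≤ q-1}, viewed as functions on ℤ/qℤ via evaluation at integers, form a complete system of orthogonal idempotents: h_s(m) h_t(m) ≡ δ_{s,t} h_t(m) (mod p) for all integers m, and ∑_{t=0}^{q-1} h_t(m) ≡ 1 (mod p) for all integers m. -/

import Mathlib

open Finset

/-- Periodicity of `Ring.choose` mod `p`. -/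
private lemma ring_choose_per (p r : ℕ) (hp : p.Prime) (q : ℕ) (hq : q = p ^ r)
    (k : ℕ) (hk : k < q) (m : ℤ) :
    ((Ring.choose (m + (q : ℤ)) k : ℤ) : ZMod p) = ((Ring.choose m k : ℤ) : ZMod p) := by
  rw [Ring.add_choose_eq k (Commute.all _ _), Int.cast_sum]
  rw [Finset.sum_eq_single (k, 0)]
  · simp [Ring.choose_natCast]
  · rintro ⟨i, j⟩ hmem hne
    have hij : i + j = k := Finset.HasAntidiagonal.mem_antidiagonal.mp hmem
    have hj0 : j ≠ 0 := by
      rintro rfl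
      obtain rfl : i = k := by omega
      exact hne rfl
    have hjq : j ≠ p ^ r := by
      have : j ≤ k := by omega
      omega
    have hdvd : p ∣ q.choose j := by
      rw [hq]; exact Nat.Prime.dvd_choose_pow hp hj0 hjq
    have hz : ((q.choose j : ZMod p)) = 0 :=
      (ZMod.natCast_eq_zero_iff _ _).mpr hdvd
    rw [show ((q : ℤ)) = ((q : ℕ) : ℤ) by norm_cast, Ring.choose_natCast]
    push_cast
    rw [hz]
    ring
  · intro hk'
    exact absurd (by simp) hk'

/-- Value of the sum defining `h t` at a natural number `n < q`. -/
private lemma h_val (q : ℕ) (hq1 : 1 ≤ q) (t : ℕ) (ht : t ≤ q - 1) (n : ℕ) (hn : n < q) :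
    (∑ k ∈ Finset.Icc t (q - 1),
        (-1) ^ (k - t) * (k.choose t : ℤ) * Ring.choose (n : ℤ) k)
      = if n = t then 1 else 0 := by
  have hcast : ∀ k : ℕ, Ring.choose ((n : ℤ)) k = (n.choose k : ℤ) := fun k => by
    rw [show ((n : ℤ)) = ((n : ℕ) : ℤ) by norm_cast, Ring.choose_natCast]
  by_cases hnt : n < t
  · have : ∀ k ∈ Finset.Icc t (q - 1),
        (-1 : ℤ) ^ (k - t) * (k.choose t : ℤ) * Ring.choose (n : ℤ) k = 0 := by
      intro k hk
      have : n < k := lt_of_lt_of_le hnt (Finset.mem_Icc.mp hk).1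
      rw [hcast, Nat.choose_eq_zero_of_lt this]
      ring
    rw [Finset.sum_eq_zero this, if_neg (by omega)]
  · push_neg at hnt
    have hnq : n ≤ q - 1 := by omega
    -- restrict the sum to `Icc t n`
    have hsub : Finset.Icc t n ⊆ Finset.Icc t (q - 1) := by
      intro k hk
      simp only [Finset.mem_Icc] at *
      omega
    rw [← Finset.sum_subset hsub (by
      intro k hk hk'
      simp only [Finset.mem_Icc] at hk hk'
      have : n < k := by omega
      rw [hcast, Nat.choose_eq_zero_of_lt this]
      ring)]
    rw [← Finset.Ico_add_one_right_eq_Icc, Finset.sum_Ico_eq_sum_range]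
    have hterm : ∀ j : ℕ, j ≤ n - t →
        (-1 : ℤ) ^ (t + j - t) * ((t + j).choose t : ℤ) * Ring.choose (n : ℤ) (t + j)
          = (n.choose t : ℤ) * ((-1) ^ j * ((n - t).choose j : ℤ)) := by
      intro j hj
      rw [hcast, Nat.add_sub_cancel_left]
      have hid := Nat.choose_mul (n := n) (show t ≤ t + j by omega)
      have hid' : (n.choose (t + j) : ℤ) * ((t + j).choose t : ℤ)
          = (n.choose t : ℤ) * ((n - t).choose (t + j - t) : ℤ) := by exact_mod_cast congrArg (Nat.cast : ℕ → ℤ) hid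
      rw [Nat.add_sub_cancel_left] at hid'
      calc (-1 : ℤ) ^ j * ((t + j).choose t : ℤ) * (n.choose (t + j) : ℤ)
          = (-1) ^ j * ((n.choose (t + j) : ℤ) * ((t + j).choose t : ℤ)) := by ring
        _ = (-1) ^ j * ((n.choose t : ℤ) * ((n - t).choose j : ℤ)) := by rw [hid']
        _ = (n.choose t : ℤ) * ((-1) ^ j * ((n - t).choose j : ℤ)) := by ring
    rw [show n + 1 - t = (n - t) + 1 by omega]
    rw [Finset.sum_congr rfl (fun j hj => hterm j (by
      simpa using Nat.lt_succ_iff.mp (Finset.mem_range.mp hj)))]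
    rw [← Finset.mul_sum, Int.alternating_sum_range_choose]
    by_cases hnt' : n = t
    · subst hnt'
      simp
    · rw [if_neg (by omega), if_neg hnt']
      ring

theorem stmt_19 (p r : ℕ) (hp : p.Prime) (hr : 1 ≤ r) (q : ℕ) (hq : q = p ^ r)
    (h : ℕ → ℤ → ℤ)
    (hdef : ∀ t : ℕ, ∀ m : ℤ,
      h t m = ∑ k ∈ Finset.Icc t (q - 1),
        (-1) ^ (k - t) * (k.choose t : ℤ) * Ring.choose m k) :
    (∀ s t : ℕ, s ≤ q - 1 → t ≤ q - 1 → ∀ m : ℤ,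
      h s m * h t m ≡ (if s = t then h t m else 0) [ZMOD (p : ℤ)]) ∧
    (∀ m : ℤ, (∑ t ∈ Finset.range q, h t m) ≡ 1 [ZMOD (p : ℤ)]) := by
  have hq1 : 1 ≤ q := by
    rw [hq]; exact Nat.one_le_pow _ _ hp.pos
  have hqZ : (0 : ℤ) < (q : ℤ) := by exact_mod_cast hq1
  have hper : ∀ t : ℕ, t ≤ q - 1 → ∀ m : ℤ,
      ((h t (m + q) : ℤ) : ZMod p) = ((h t m : ℤ) : ZMod p) := by
    intro t ht m
    rw [hdef, hdef, Int.cast_sum, Int.cast_sum]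
    refine Finset.sum_congr rfl fun k hk => ?_
    have hkq : k < q := by have := (Finset.mem_Icc.mp hk).2; omega
    simp only [Int.cast_mul]
    rw [ring_choose_per p r hp q hq k hkq m]
  have hshift : ∀ t : ℕ, t ≤ q - 1 → ∀ (n : ℤ) (m : ℤ),
      ((h t (m + q * n) : ℤ) : ZMod p) = ((h t m : ℤ) : ZMod p) := by
    intro t ht n
    induction n using Int.induction_on with
    | zero => simp
    | succ n ih =>
      intro m
      rw [show m + (q : ℤ) * ((n : ℤ) + 1) = (m + q * n) + q by ring, hper t ht, ih]
    | pred n ih =>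
      intro m
      have h1 := hper t ht (m + (q : ℤ) * (-(n : ℤ) - 1))
      rw [show m + (q : ℤ) * (-(n : ℤ) - 1) + q = m + q * (-(n : ℤ)) by ring] at h1
      rw [← h1, ih]
  have key : ∀ t : ℕ, t ≤ q - 1 → ∀ m : ℤ,
      ((h t m : ℤ) : ZMod p) = if (m % q).toNat = t then 1 else 0 := by
    intro t ht m
    have hmod0 : 0 ≤ m % q := Int.emod_nonneg m (by omega)
    have hmodlt : m % q < q := Int.emod_lt_of_pos m hqZ
    set n : ℕ := (m % q).toNat with hn
    have hnq : n < q := by omega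
    have hm : m = (n : ℤ) + q * (m / q) := by
      rw [hn, Int.toNat_of_nonneg hmod0]
      exact (Int.emod_add_mul_ediv m q).symm
    have h2 : ((h t m : ℤ) : ZMod p) = ((h t ((n : ℤ) + q * (m / q)) : ℤ) : ZMod p) := by
      rw [← hm]
    rw [h2, hshift t ht (m / q), hdef, h_val q hq1 t ht n hnq]
    split <;> simp
  constructor
  · intro s t hs ht m
    rw [← ZMod.intCast_eq_intCast_iff]
    by_cases hst : s = t
    · subst hst
      rw [if_pos rfl, Int.cast_mul, key s hs m]
      split <;> simp
    · rw [if_neg hst, Int.cast_mul, key s hs m, key t ht m, Int.cast_zero]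
      by_cases h1 : (m % q).toNat = s
      · rw [if_pos h1, if_neg (by omega)]
        ring
      · rw [if_neg h1]
        ring
  · intro m
    rw [← ZMod.intCast_eq_intCast_iff, Int.cast_sum, Int.cast_one]
    have hmod0 : 0 ≤ m % q := Int.emod_nonneg m (by omega)
    have hmodlt : m % q < q := Int.emod_lt_of_pos m hqZ
    have hmem : (m % q).toNat ∈ Finset.range q := Finset.mem_range.mpr (by omega)
    calc ∑ t ∈ Finset.range q, ((h t m : ℤ) : ZMod p)
        = ∑ t ∈ Finset.range q, if (m % q).toNat = t then 1 else 0 :=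
          Finset.sum_congr rfl fun t htm => key t (by
            have := Finset.mem_range.mp htm; omega) m
      _ = 1 := by rw [Finset.sum_ite_eq, if_pos hmem]
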